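/- Let f : [0,∞) → [0,∞) be decreasing, and let S, ξ be real random variables on the same probability space with ξ ≤ S almost surely and S ≥ 0 almost surely. Then for every λ > 0, ∫₀^∞ e^{−λx} E[1_{{S < x}} f(x − ξ)] dx ≤ E[e^{−λS}] · ∫₀^∞ e^{−λx} f(x) dx. -/

import Mathlib

open MeasureTheory

/-- for `f : [0,∞) → [0,∞)` decreasing and random variables `ξ ≤ S` a.s.,
`S ≥ 0` a.s., for every `λ > 0`:
`∫₀^∞ e^{-λx} E[1_{S<x} f(x-ξ)] dx ≤ E[e^{-λS}] ∫₀^∞ e^{-λx} f(x) dx`. -/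
lemma aux_pt (f : ℝ → ℝ) (hf_meas : Measurable f)
    (hf_nonneg : ∀ x ≥ (0 : ℝ), 0 ≤ f x)
    (hf_anti : AntitoneOn f (Set.Ici 0))
    (l : ℝ) (hl : 0 < l) (s t : ℝ) (hs : 0 ≤ s) (hts : t ≤ s) :
    (∫⁻ x in Set.Ioi (0 : ℝ),
        ENNReal.ofReal (Real.exp (-l * x)) *
          Set.indicator (Set.Ioi s) (fun x => ENNReal.ofReal (f (x - t))) x)
      ≤ ENNReal.ofReal (Real.exp (-l * s)) *
          ∫⁻ x in Set.Ioi (0 : ℝ), ENNReal.ofReal (Real.exp (-l * x) * f x) := by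
  have h1 : (∫⁻ x in Set.Ioi (0 : ℝ),
        ENNReal.ofReal (Real.exp (-l * x)) *
          Set.indicator (Set.Ioi s) (fun x => ENNReal.ofReal (f (x - t))) x)
      = ∫⁻ x in Set.Ioi s, ENNReal.ofReal (Real.exp (-l * x)) * ENNReal.ofReal (f (x - t)) := by
    rw [show (fun x => ENNReal.ofReal (Real.exp (-l * x)) *
          Set.indicator (Set.Ioi s) (fun x => ENNReal.ofReal (f (x - t))) x)
        = Set.indicator (Set.Ioi s)
            (fun x => ENNReal.ofReal (Real.exp (-l * x)) * ENNReal.ofReal (f (x - t)))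
        from funext fun x => by by_cases h : x ∈ Set.Ioi s <;>
          simp [Set.indicator_apply, h]]
    rw [lintegral_indicator measurableSet_Ioi _, Measure.restrict_restrict measurableSet_Ioi,
      show Set.Ioi s ∩ Set.Ioi 0 = Set.Ioi s from Set.inter_eq_left.2 (fun x hx => lt_of_le_of_lt hs hx)]
  rw [h1]
  have h2 : (∫⁻ x in Set.Ioi s, ENNReal.ofReal (Real.exp (-l * x)) * ENNReal.ofReal (f (x - t)))
      ≤ ∫⁻ x in Set.Ioi s, ENNReal.ofReal (Real.exp (-l * x)) * ENNReal.ofReal (f (x - s)) := by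
    refine setLIntegral_mono (by fun_prop) fun x hx => ?_
    refine mul_le_mul_right (ENNReal.ofReal_le_ofReal ?_) _
    have hxs : (0:ℝ) ≤ x - s := le_of_lt (sub_pos.2 hx)
    exact hf_anti hxs (le_trans hxs (by linarith)) (by linarith)
  refine h2.trans (le_of_eq ?_)
  have h3 : (∫⁻ x in Set.Ioi s, ENNReal.ofReal (Real.exp (-l * x)) * ENNReal.ofReal (f (x - s)))
      = ∫⁻ y in Set.Ioi (0:ℝ),
          ENNReal.ofReal (Real.exp (-l * (y + s))) * ENNReal.ofReal (f y) := by
    rw [← (measurePreserving_add_right volume s).setLIntegral_comp_preimage_emb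
        (measurableEmbedding_addRight s)
        (fun x => ENNReal.ofReal (Real.exp (-l * x)) * ENNReal.ofReal (f (x - s)))]
    congr 1
    · ext y; simp
    · funext y; simp
  rw [h3, ← lintegral_const_mul _ (by fun_prop)]
  refine setLIntegral_congr_fun measurableSet_Ioi (fun y hy => ?_)
  rw [show Real.exp (-l * (y + s)) = Real.exp (-l * s) * Real.exp (-l * y) by
    rw [← Real.exp_add]; ring_nf]
  rw [ENNReal.ofReal_mul (le_of_lt (Real.exp_pos _)),
    ENNReal.ofReal_mul (le_of_lt (Real.exp_pos _)), mul_assoc]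

theorem stmt_5 {Ω : Type*} [MeasurableSpace Ω] (P : Measure Ω) [IsProbabilityMeasure P]
    (f : ℝ → ℝ) (hf_meas : Measurable f)
    (hf_nonneg : ∀ x ≥ (0 : ℝ), 0 ≤ f x)
    (hf_anti : AntitoneOn f (Set.Ici 0))
    (S ξ : Ω → ℝ) (hS : Measurable S) (hξ : Measurable ξ)
    (h_le : ∀ᵐ ω ∂P, ξ ω ≤ S ω) (hS0 : ∀ᵐ ω ∂P, 0 ≤ S ω)
    (l : ℝ) (hl : 0 < l) :
    (∫⁻ x in Set.Ioi (0 : ℝ),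
        ENNReal.ofReal (Real.exp (-l * x)) *
          ∫⁻ ω, Set.indicator {ω | S ω < x}
            (fun ω => ENNReal.ofReal (f (x - ξ ω))) ω ∂P)
      ≤ (∫⁻ ω, ENNReal.ofReal (Real.exp (-l * S ω)) ∂P) *
          ∫⁻ x in Set.Ioi (0 : ℝ), ENNReal.ofReal (Real.exp (-l * x) * f x) := by
  set F : ℝ → Ω → ENNReal := fun x ω =>
    ENNReal.ofReal (Real.exp (-l * x)) *
      Set.indicator {ω | S ω < x} (fun ω => ENNReal.ofReal (f (x - ξ ω))) ω with hF
  have hFmeas : Measurable (Function.uncurry F) := by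
    apply Measurable.mul (by fun_prop)
    have : (Function.uncurry fun x ω =>
        Set.indicator {ω | S ω < x} (fun ω => ENNReal.ofReal (f (x - ξ ω))) ω)
        = fun p : ℝ × Ω => Set.indicator {p : ℝ × Ω | S p.2 < p.1}
            (fun p => ENNReal.ofReal (f (p.1 - ξ p.2))) p := by
      funext p; rcases p with ⟨x, ω⟩
      simp [Set.indicator_apply, Function.uncurry]
    rw [show (fun p : ℝ × Ω => Set.indicator {ω | S ω < p.1}
        (fun ω => ENNReal.ofReal (f (p.1 - ξ ω))) p.2)
        = Function.uncurry fun x ω =>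
            Set.indicator {ω | S ω < x} (fun ω => ENNReal.ofReal (f (x - ξ ω))) ω from rfl] at *
    rw [this]
    exact ((Measurable.indicator (by fun_prop)
      (measurableSet_lt (hS.comp measurable_snd) measurable_fst)))
  have hswap : (∫⁻ x in Set.Ioi (0 : ℝ), ∫⁻ ω, F x ω ∂P)
      = ∫⁻ ω, (∫⁻ x in Set.Ioi (0 : ℝ), F x ω) ∂P := by
    exact lintegral_lintegral_swap hFmeas.aemeasurable
  have hconst : (∫⁻ x in Set.Ioi (0 : ℝ),
        ENNReal.ofReal (Real.exp (-l * x)) *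
          ∫⁻ ω, Set.indicator {ω | S ω < x}
            (fun ω => ENNReal.ofReal (f (x - ξ ω))) ω ∂P)
      = ∫⁻ x in Set.Ioi (0 : ℝ), ∫⁻ ω, F x ω ∂P := by
    refine lintegral_congr fun x => ?_
    rw [hF]
    exact (lintegral_const_mul _ (Measurable.indicator (by fun_prop)
      (hS measurableSet_Iio))).symm
  rw [hconst, hswap]
  set C := ∫⁻ x in Set.Ioi (0 : ℝ), ENNReal.ofReal (Real.exp (-l * x) * f x) with hC
  calc (∫⁻ ω, (∫⁻ x in Set.Ioi (0 : ℝ), F x ω) ∂P)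
      ≤ ∫⁻ ω, ENNReal.ofReal (Real.exp (-l * S ω)) * C ∂P := by
        refine lintegral_mono_ae ?_
        filter_upwards [h_le, hS0] with ω hle h0
        have heq : (fun x => F x ω) = fun x =>
            ENNReal.ofReal (Real.exp (-l * x)) *
              Set.indicator (Set.Ioi (S ω)) (fun x => ENNReal.ofReal (f (x - ξ ω))) x := by
          funext x
          by_cases h : S ω < x <;> simp [hF, Set.indicator_apply, h]
        rw [heq]
        exact aux_pt f hf_meas hf_nonneg hf_anti l hl (S ω) (ξ ω) h0 hle
    _ = (∫⁻ ω, ENNReal.ofReal (Real.exp (-l * S ω)) ∂P) * C :=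
        lintegral_mul_const _ (by fun_prop)
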